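/- arXiv:1202.2808 — 6 statements merged into one kernel-verified Lean document; each statement's English description precedes it below -/
import Mathlib

section
/- Let U ⊆ ℂ be open, let λ ∈ ℂ, and suppose every t ∈ U satisfies t ≠ 0 and t ≠ λ. Let c₁, c₂ : U → ℂ, let y : U → ℂ be twice differentiable and satisfy y''(t) + c₁(t)·y'(t) + c₂(t)·y(t) = 0 for all t ∈ U, and let w : U → ℂ be differentiable with w(t)²·t·(t−λ) = 1 for all t ∈ U. Then z := w·y is twice differentiable on U and satisfies z''(t) + α(t)·z'(t) + β(t)·z(t) = 0 for all t ∈ U, where α(t) = c₁(t) + (2t−λ)/(t(t−λ)) and β(t) = c₂(t) + c₁(t)·(2t−λ)/(2t(t−λ)) − λ²/(4t²(t−λ)²). -/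
set_option maxHeartbeats 1000000 in
/-- If `y` solves the Picard-Fuchs equation `y'' + c₁ y' + c₂ y = 0` of the base
elliptic surface on an open set `U` avoiding `0` and `λ`, and `w` is a differentiable
branch of `(t(t-λ))^{-1/2}` (i.e. `w² · t · (t-λ) = 1`), then `z = w·y` is twice
differentiable and solves `z'' + α z' + β z = 0` with the indicated `α`, `β`. -/
theorem twist_substitution (U : Set ℂ) (hU : IsOpen U) (lam : ℂ)
    (hUavoid : ∀ t ∈ U, t ≠ 0 ∧ t ≠ lam)
    (c₁ c₂ y w : ℂ → ℂ)
    (hy1 : ∀ t ∈ U, DifferentiableAt ℂ y t)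
    (hy2 : ∀ t ∈ U, DifferentiableAt ℂ (deriv y) t)
    (hODE : ∀ t ∈ U, deriv (deriv y) t + c₁ t * deriv y t + c₂ t * y t = 0)
    (hw : ∀ t ∈ U, DifferentiableAt ℂ w t)
    (hwsq : ∀ t ∈ U, (w t) ^ 2 * t * (t - lam) = 1) :
    (∀ t ∈ U, DifferentiableAt ℂ (fun s => w s * y s) t) ∧
    (∀ t ∈ U, DifferentiableAt ℂ (deriv (fun s => w s * y s)) t) ∧
    (∀ t ∈ U,
      deriv (deriv (fun s => w s * y s)) t
        + (c₁ t + (2 * t - lam) / (t * (t - lam))) * deriv (fun s => w s * y s) t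
        + (c₂ t + c₁ t * (2 * t - lam) / (2 * t * (t - lam))
            - lam ^ 2 / (4 * t ^ 2 * (t - lam) ^ 2)) * (w t * y t) = 0) := by
  have hne : ∀ t ∈ U, t ≠ 0 ∧ t - lam ≠ 0 := fun t ht =>
    ⟨(hUavoid t ht).1, sub_ne_zero.mpr (hUavoid t ht).2⟩
  -- derivative of w
  have hwderiv : ∀ t ∈ U, deriv w t = -(w t) * (2 * t - lam) / (2 * t * (t - lam)) := by
    intro t ht
    obtain ⟨ht0, htl⟩ := hne t ht
    have hd : HasDerivAt (fun s => w s ^ 2 * s * (s - lam))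
        ((((2 : ℕ) * w t ^ 1 * deriv w t) * t + w t ^ 2 * 1) * (t - lam)
          + w t ^ 2 * t * 1) t := by
      exact ((((hw t ht).hasDerivAt.pow 2).mul (hasDerivAt_id t)).mul
        ((hasDerivAt_id t).sub_const lam))
    have heq : (fun s => w s ^ 2 * s * (s - lam)) =ᶠ[nhds t] fun _ => (1 : ℂ) := by
      filter_upwards [hU.mem_nhds ht] with s hs using hwsq s hs
    have h0 : (((2 : ℕ) * w t ^ 1 * deriv w t) * t + w t ^ 2 * 1) * (t - lam)
          + w t ^ 2 * t * 1 = 0 :=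
      hd.unique ((hasDerivAt_const t (1 : ℂ)).congr_of_eventuallyEq heq)
    have wne : w t ≠ 0 := by
      intro h
      have := hwsq t ht
      rw [h] at this
      simp at this
    have key : deriv w t * (2 * t * (t - lam)) * w t = (-(w t) * (2 * t - lam)) * w t := by
      push_cast at h0
      linear_combination h0
    have key2 := mul_right_cancel₀ wne key
    field_simp
    linear_combination key2
  -- first differentiability
  have hz1 : ∀ t ∈ U, DifferentiableAt ℂ (fun s => w s * y s) t :=
    fun t ht => (hw t ht).mul (hy1 t ht)
  -- the first derivative of z agrees on U with an explicit function
  have heqZ : ∀ t ∈ U, deriv (fun s => w s * y s) =ᶠ[nhds t]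
      fun s => -(w s) * (2 * s - lam) / (2 * s * (s - lam)) * y s + w s * deriv y s := by
    intro t ht
    filter_upwards [hU.mem_nhds ht] with s hs
    rw [deriv_fun_mul (hw s hs) (hy1 s hs), hwderiv s hs]
  have hZ1 : ∀ t ∈ U, DifferentiableAt ℂ
      (fun s => -(w s) * (2 * s - lam) / (2 * s * (s - lam)) * y s + w s * deriv y s) t := by
    intro t ht
    obtain ⟨ht0, htl⟩ := hne t ht
    have hden : (2 : ℂ) * t * (t - lam) ≠ 0 := by
      simp [ht0, htl]
    exact ((((hw t ht).neg.mul (by fun_prop)).div (by fun_prop) hden).mul (hy1 t ht)).add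
      ((hw t ht).mul (hy2 t ht))
  refine ⟨hz1, fun t ht => ((hZ1 t ht).congr_of_eventuallyEq (heqZ t ht)), ?_⟩
  intro t ht
  obtain ⟨ht0, htl⟩ := hne t ht
  have hden : (2 : ℂ) * t * (t - lam) ≠ 0 := by simp [ht0, htl]
  -- compute second derivative
  have hQ : HasDerivAt (fun s => -(w s) * (2 * s - lam) / (2 * s * (s - lam)))
      (((-(deriv w t) * (2 * t - lam) + -(w t) * (2 * 1)) * (2 * t * (t - lam))
          - -(w t) * (2 * t - lam) * ((2 * 1) * (t - lam) + 2 * t * 1))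
        / (2 * t * (t - lam)) ^ 2) t := by
    exact ((hw t ht).hasDerivAt.neg.mul
        (((hasDerivAt_id t).const_mul 2).sub_const lam)).div
      ((((hasDerivAt_id t).const_mul 2).mul ((hasDerivAt_id t).sub_const lam))) hden
  have hZ1' : HasDerivAt
      (fun s => -(w s) * (2 * s - lam) / (2 * s * (s - lam)) * y s + w s * deriv y s)
      ((((-(deriv w t) * (2 * t - lam) + -(w t) * (2 * 1)) * (2 * t * (t - lam))
          - -(w t) * (2 * t - lam) * ((2 * 1) * (t - lam) + 2 * t * 1))
        / (2 * t * (t - lam)) ^ 2) * y t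
        + (-(w t) * (2 * t - lam) / (2 * t * (t - lam))) * deriv y t
        + (deriv w t * deriv y t + w t * deriv (deriv y) t)) t :=
    (hQ.mul (hy1 t ht).hasDerivAt).add ((hw t ht).hasDerivAt.mul (hy2 t ht).hasDerivAt)
  have hzz : deriv (deriv (fun s => w s * y s)) t
      = (((-(deriv w t) * (2 * t - lam) + -(w t) * (2 * 1)) * (2 * t * (t - lam))
          - -(w t) * (2 * t - lam) * ((2 * 1) * (t - lam) + 2 * t * 1))
        / (2 * t * (t - lam)) ^ 2) * y t
        + (-(w t) * (2 * t - lam) / (2 * t * (t - lam))) * deriv y t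
        + (deriv w t * deriv y t + w t * deriv (deriv y) t) := by
    rw [(heqZ t ht).deriv_eq, hZ1'.deriv]
  have hz' : deriv (fun s => w s * y s) t = deriv w t * y t + w t * deriv y t :=
    deriv_fun_mul (hw t ht) (hy1 t ht)
  have hY : deriv (deriv y) t = -(c₁ t * deriv y t + c₂ t * y t) := by
    linear_combination hODE t ht
  rw [hzz, hz', hY, hwderiv t ht]
  field_simp [ht0, htl]
  ring
end

section
/- Let U ⊆ ℂ be open, let a : U → ℂ be differentiable and b : U → ℂ, and let y₁, y₂ : U → ℂ be three times differentiable solutions of y'' + a·y' + b·y = 0 on U such that y₂(t) ≠ 0 and the Wronskian y₁'(t)·y₂(t) − y₁(t)·y₂'(t) ≠ 0 for all t ∈ U. Then z := y₁/y₂ is three times differentiable with z'(t) ≠ 0 on U, and S(z)(t) = 4b(t) − a(t)² − 2a'(t) for all t ∈ U. -/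
/-- The Schwarzian derivative `S(z) = (2 z' z''' - 3 (z'')²)/(z')²`. -/
noncomputable def schwarzian (z : ℂ → ℂ) : ℂ → ℂ := fun t =>
  (2 * deriv z t * deriv (deriv (deriv z)) t - 3 * (deriv (deriv z) t) ^ 2)
    / (deriv z t) ^ 2

/-- The Schwarzian derivative of the ratio `z = y₁/y₂` of a basis of solutions of
`y'' + a y' + b y = 0` equals `4b - a² - 2a'`. -/
theorem schwarzian_of_solution_ratio (U : Set ℂ) (hU : IsOpen U) (a b y₁ y₂ : ℂ → ℂ)
    (ha : ∀ t ∈ U, DifferentiableAt ℂ a t)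
    (hy₁1 : ∀ t ∈ U, DifferentiableAt ℂ y₁ t)
    (hy₁2 : ∀ t ∈ U, DifferentiableAt ℂ (deriv y₁) t)
    (hy₁3 : ∀ t ∈ U, DifferentiableAt ℂ (deriv (deriv y₁)) t)
    (hy₂1 : ∀ t ∈ U, DifferentiableAt ℂ y₂ t)
    (hy₂2 : ∀ t ∈ U, DifferentiableAt ℂ (deriv y₂) t)
    (hy₂3 : ∀ t ∈ U, DifferentiableAt ℂ (deriv (deriv y₂)) t)
    (hODE₁ : ∀ t ∈ U, deriv (deriv y₁) t + a t * deriv y₁ t + b t * y₁ t = 0)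
    (hODE₂ : ∀ t ∈ U, deriv (deriv y₂) t + a t * deriv y₂ t + b t * y₂ t = 0)
    (hy₂ne : ∀ t ∈ U, y₂ t ≠ 0)
    (hWr : ∀ t ∈ U, deriv y₁ t * y₂ t - y₁ t * deriv y₂ t ≠ 0) :
    (∀ t ∈ U, DifferentiableAt ℂ (fun s => y₁ s / y₂ s) t) ∧
    (∀ t ∈ U, DifferentiableAt ℂ (deriv (fun s => y₁ s / y₂ s)) t) ∧
    (∀ t ∈ U, DifferentiableAt ℂ (deriv (deriv (fun s => y₁ s / y₂ s))) t) ∧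
    (∀ t ∈ U, deriv (fun s => y₁ s / y₂ s) t ≠ 0) ∧
    (∀ t ∈ U, schwarzian (fun s => y₁ s / y₂ s) t
        = 4 * b t - (a t) ^ 2 - 2 * deriv a t) := by
  set z : ℂ → ℂ := fun s => y₁ s / y₂ s with hzdef
  set W : ℂ → ℂ := fun s => deriv y₁ s * y₂ s - y₁ s * deriv y₂ s with hWdef
  -- ODE rewrites
  have e1 : ∀ t ∈ U, deriv (deriv y₁) t = -(a t * deriv y₁ t + b t * y₁ t) := fun t ht => by
    linear_combination hODE₁ t ht
  have e2 : ∀ t ∈ U, deriv (deriv y₂) t = -(a t * deriv y₂ t + b t * y₂ t) := fun t ht => by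
    linear_combination hODE₂ t ht
  -- first derivative of z
  have hz1 : ∀ t ∈ U, HasDerivAt z (W t / y₂ t ^ 2) t := by
    intro t ht
    have h := (hy₁1 t ht).hasDerivAt.div (hy₂1 t ht).hasDerivAt (hy₂ne t ht)
    exact h
  have hdz : ∀ t ∈ U, deriv z t = W t / y₂ t ^ 2 := fun t ht => (hz1 t ht).deriv
  -- derivative of W
  have hWd : ∀ t ∈ U, HasDerivAt W (-(a t) * W t) t := by
    intro t ht
    have h := ((hy₁2 t ht).hasDerivAt.mul (hy₂1 t ht).hasDerivAt).sub
      ((hy₁1 t ht).hasDerivAt.mul (hy₂2 t ht).hasDerivAt)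
    refine h.congr_deriv ?_
    symm
    rw [e1 t ht, e2 t ht, hWdef]
    ring
  -- second derivative of z
  have hz2 : ∀ t ∈ U, HasDerivAt (deriv z)
      ((-(a t) * W t * y₂ t - 2 * W t * deriv y₂ t) / y₂ t ^ 3) t := by
    intro t ht
    have hne2 : y₂ t ^ 2 ≠ 0 := pow_ne_zero 2 (hy₂ne t ht)
    have hpow : HasDerivAt (fun s => y₂ s ^ 2) (2 * y₂ t ^ 1 * deriv y₂ t) t := by
      exact ((hy₂1 t ht).hasDerivAt.pow 2).congr_deriv (by ring)
    have h := (hWd t ht).div hpow hne2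
    have heq : deriv z =ᶠ[nhds t] fun s => W s / y₂ s ^ 2 :=
      Filter.eventually_of_mem (hU.mem_nhds ht) fun s hs => hdz s hs
    have h' := h.congr_of_eventuallyEq heq
    refine h'.congr_deriv ?_
    symm
    rw [div_eq_div_iff (pow_ne_zero 3 (hy₂ne t ht)) (pow_ne_zero 2 hne2)]
    ring
  have hdz2 : ∀ t ∈ U, deriv (deriv z) t
      = (-(a t) * W t * y₂ t - 2 * W t * deriv y₂ t) / y₂ t ^ 3 :=
    fun t ht => (hz2 t ht).deriv
  -- third derivative of z
  have hz3 : ∀ t ∈ U, HasDerivAt (deriv (deriv z))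
      ((((-(deriv a t) + a t ^ 2 + 2 * b t) * W t * y₂ t + 3 * a t * W t * deriv y₂ t)
          * y₂ t ^ 3
        - (-(a t) * W t * y₂ t - 2 * W t * deriv y₂ t) * (3 * y₂ t ^ 2 * deriv y₂ t))
        / (y₂ t ^ 3) ^ 2) t := by
    intro t ht
    have hne3 : y₂ t ^ 3 ≠ 0 := pow_ne_zero 3 (hy₂ne t ht)
    have hN : HasDerivAt (fun s => -(a s) * W s * y₂ s - 2 * W s * deriv y₂ s)
        ((-(deriv a t) + a t ^ 2 + 2 * b t) * W t * y₂ t + 3 * a t * W t * deriv y₂ t) t := by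
      have h := ((((ha t ht).hasDerivAt.neg.mul (hWd t ht)).mul
        (hy₂1 t ht).hasDerivAt)).sub
        (((hasDerivAt_const t (2:ℂ)).mul (hWd t ht)).mul (hy₂2 t ht).hasDerivAt)
      refine h.congr_deriv ?_
      symm
      rw [e2 t ht]
      simp only [Pi.mul_apply, Pi.neg_apply]
      ring
    have hpow : HasDerivAt (fun s => y₂ s ^ 3) (3 * y₂ t ^ 2 * deriv y₂ t) t := by
      exact ((hy₂1 t ht).hasDerivAt.pow 3).congr_deriv (by ring)
    have h := hN.div hpow hne3
    have heq : deriv (deriv z) =ᶠ[nhds t]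
        fun s => (-(a s) * W s * y₂ s - 2 * W s * deriv y₂ s) / y₂ s ^ 3 :=
      Filter.eventually_of_mem (hU.mem_nhds ht) fun s hs => hdz2 s hs
    exact h.congr_of_eventuallyEq heq
  have hdzne : ∀ t ∈ U, deriv z t ≠ 0 := by
    intro t ht
    rw [hdz t ht]
    exact div_ne_zero (hWr t ht) (pow_ne_zero 2 (hy₂ne t ht))
  refine ⟨fun t ht => (hz1 t ht).differentiableAt,
    fun t ht => (hz2 t ht).differentiableAt,
    fun t ht => (hz3 t ht).differentiableAt,
    hdzne, ?_⟩
  intro t ht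
  have hWne : W t ≠ 0 := hWr t ht
  have hy2 := hy₂ne t ht
  have key : ∀ (A A' B Y Y' Wt : ℂ), Y ≠ 0 → Wt ≠ 0 →
      (2 * (Wt / Y ^ 2) * ((((-A' + A ^ 2 + 2 * B) * Wt * Y + 3 * A * Wt * Y') * Y ^ 3 -
          (-A * Wt * Y - 2 * Wt * Y') * (3 * Y ^ 2 * Y')) / (Y ^ 3) ^ 2)
        - 3 * ((-A * Wt * Y - 2 * Wt * Y') / Y ^ 3) ^ 2) / (Wt / Y ^ 2) ^ 2
        = 4 * B - A ^ 2 - 2 * A' := by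
    intro A A' B Y Y' Wt hY hW
    rw [div_eq_iff (pow_ne_zero 2 (div_ne_zero hW (pow_ne_zero 2 hY)))]
    field_simp
    ring
  unfold schwarzian
  rw [hdz t ht, hdz2 t ht, (hz3 t ht).deriv]
  exact key (a t) (deriv a t) (b t) (y₂ t) (deriv y₂ t) (W t) hy2 hWne
end

section
/- Let n ≥ 1 be a natural number, let U be a punctured open neighborhood of 0 in ℂ, let z : U → ℂ be three times differentiable with z'(ζ) ≠ 0 for all ζ ∈ U, and let α ∈ ℂ be such that ζ²·S(z)(ζ) tends to α as ζ → 0 through nonzero values. Then η²·S(z∘(η ↦ ηⁿ))(η) tends to 1 − n²·(1 − α) as η → 0 through nonzero values (the composite being defined on a punctured neighborhood of 0). -/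
lemma schw_aux1 (n : ℕ) (hn : 1 ≤ n) (x : ℂ) (hx : x ≠ 0) :
    x ^ (n - 1) = x ^ n / x := by
  rw [eq_div_iff hx, ← pow_succ]
  congr 1; omega

lemma schw_aux2 (n : ℕ) (hn : 1 ≤ n) (x : ℂ) (hx : x ≠ 0) :
    ((n - 1 : ℕ) : ℂ) * x ^ (n - 2) = ((n : ℂ) - 1) * (x ^ n / x / x) := by
  have hdd : x ^ n / x / x = x ^ n / x ^ 2 := by
    rw [div_div]; congr 1; ring
  rw [hdd]
  rcases Nat.lt_or_ge n 2 with h | h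
  · have hn1 : n = 1 := by omega
    subst hn1; simp
  · have h1 : ((n - 1 : ℕ) : ℂ) = (n : ℂ) - 1 := by
      have := Nat.cast_sub (R := ℂ) (show 1 ≤ n by omega); simpa using this
    rw [h1]
    congr 1
    rw [eq_div_iff (pow_ne_zero _ hx), ← pow_add]
    congr 1; omega

lemma schw_aux3 (n : ℕ) (hn : 1 ≤ n) (x : ℂ) (hx : x ≠ 0) :
    ((n - 1 : ℕ) : ℂ) * (((n - 2 : ℕ) : ℂ) * x ^ (n - 3))
      = ((n : ℂ) - 1) * (((n : ℂ) - 2) * (x ^ n / x / x ^ 2)) := by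
  have hdd : x ^ n / x / x ^ 2 = x ^ n / x ^ 3 := by
    rw [div_div]; congr 1; ring
  rw [hdd]
  rcases Nat.lt_or_ge n 3 with h | h
  · interval_cases n <;> norm_num
  · have h1 : ((n - 1 : ℕ) : ℂ) = (n : ℂ) - 1 := by
      have := Nat.cast_sub (R := ℂ) (show 1 ≤ n by omega); simpa using this
    have h2 : ((n - 2 : ℕ) : ℂ) = (n : ℂ) - 2 := by
      have := Nat.cast_sub (R := ℂ) (show 2 ≤ n by omega); simpa using this
    rw [h1, h2]
    congr 2
    rw [eq_div_iff (pow_ne_zero _ hx), ← pow_add]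
    congr 1; omega

set_option maxHeartbeats 1000000 in
lemma schw_key (a b c d u v x : ℂ) (hb : b ≠ 0) (hx : x ≠ 0) (ha : a ≠ 0)
    (hv : v ≠ 0) (huv : u = v * x) :
    x ^ 2 * ((2 * (b * (a * v)) *
      ((d * (a * v) * (a * v) + c * (a * ((a - 1) * (v / x)))) * (a * v)
        + c * (a * v) * (a * ((a - 1) * (v / x)))
        + (c * (a * v) * (a * ((a - 1) * (v / x)))
           + b * (a * ((a - 1) * ((a - 2) * (v / x ^ 2))))))
      - 3 * (c * (a * v) * (a * v) + b * (a * ((a - 1) * (v / x)))) ^ 2)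
      / (b * (a * v)) ^ 2)
    = a ^ 2 * (u ^ 2 * ((2 * b * d - 3 * c ^ 2) / b ^ 2)) + (1 - a ^ 2) := by
  subst huv
  obtain ⟨s, rfl⟩ : ∃ s, v = s * x ^ 2 :=
    ⟨v / x ^ 2, (div_mul_cancel₀ v (pow_ne_zero 2 hx)).symm⟩
  have hs : s ≠ 0 := fun h => hv (by simp [h])
  have e1 : s * x ^ 2 / x = s * x := by
    field_simp
  have e2 : s * x ^ 2 / x ^ 2 = s := by
    field_simp
  rw [e1, e2]
  have hD : (b * (a * (s * x ^ 2))) ^ 2 ≠ 0 :=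
    pow_ne_zero _ (mul_ne_zero hb (mul_ne_zero ha (mul_ne_zero hs (pow_ne_zero 2 hx))))
  rw [← mul_div_assoc, div_eq_iff hD]
  field_simp
  ring

set_option maxHeartbeats 1000000 in
/-- If `ζ² S(z)(ζ) → α` as `ζ → 0` through nonzero values (so the Schwarzian
residue of `S(z)(dζ)²` at `0` is `1 - α`), then pulling back through the degree-`n`
map `ζ = ηⁿ` gives `η² S(z ∘ (·ⁿ))(η) → 1 - n²(1 - α)`, i.e. the Schwarzian
residue is multiplied by `n²`. -/
theorem schwarzian_residue_pullback_pow (n : ℕ) (hn : 1 ≤ n)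
    (U : Set ℂ) (hUopen : IsOpen U) (hU0 : (0 : ℂ) ∉ U)
    (hUnbhd : U ∪ {0} ∈ nhds (0 : ℂ))
    (z : ℂ → ℂ)
    (hz1 : ∀ ζ ∈ U, DifferentiableAt ℂ z ζ)
    (hz2 : ∀ ζ ∈ U, DifferentiableAt ℂ (deriv z) ζ)
    (hz3 : ∀ ζ ∈ U, DifferentiableAt ℂ (deriv (deriv z)) ζ)
    (hz' : ∀ ζ ∈ U, deriv z ζ ≠ 0)
    (α : ℂ)
    (hlim : Filter.Tendsto (fun ζ : ℂ => ζ ^ 2 * schwarzian z ζ)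
      (nhdsWithin 0 {(0 : ℂ)}ᶜ) (nhds α)) :
    Filter.Tendsto (fun η : ℂ => η ^ 2 * schwarzian (fun η' => z (η' ^ n)) η)
      (nhdsWithin 0 {(0 : ℂ)}ᶜ) (nhds (1 - (n : ℂ) ^ 2 * (1 - α))) := by
  have hn0 : (n : ℂ) ≠ 0 := Nat.cast_ne_zero.mpr (by omega)
  set W : Set ℂ := ((fun η : ℂ => η ^ n) ⁻¹' U) ∩ {(0 : ℂ)}ᶜ with hWdef
  have hWopen : IsOpen W :=
    (hUopen.preimage (continuous_pow n)).inter isOpen_compl_singleton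
  have hmemW : ∀ y ∈ W, y ^ n ∈ U := fun y hy => hy.1
  have hne : ∀ y ∈ W, y ≠ 0 := fun y hy => hy.2
  -- first derivative on W
  have hgAt : ∀ y ∈ W, HasDerivAt (fun η' : ℂ => z (η' ^ n))
      (deriv z (y ^ n) * ((n : ℂ) * y ^ (n - 1))) y := fun y hy =>
    ((hz1 _ (hmemW y hy)).hasDerivAt).comp y (hasDerivAt_pow n y)
  have hf1At : ∀ y ∈ W, HasDerivAt (fun x : ℂ => deriv z (x ^ n))
      (deriv (deriv z) (y ^ n) * ((n : ℂ) * y ^ (n - 1))) y := fun y hy =>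
    ((hz2 _ (hmemW y hy)).hasDerivAt).comp y (hasDerivAt_pow n y)
  have hf2At : ∀ y ∈ W, HasDerivAt (fun x : ℂ => deriv (deriv z) (x ^ n))
      (deriv (deriv (deriv z)) (y ^ n) * ((n : ℂ) * y ^ (n - 1))) y := fun y hy =>
    ((hz3 _ (hmemW y hy)).hasDerivAt).comp y (hasDerivAt_pow n y)
  have hqAt : ∀ y : ℂ, HasDerivAt (fun x : ℂ => (n : ℂ) * x ^ (n - 1))
      ((n : ℂ) * (((n - 1 : ℕ) : ℂ) * y ^ (n - 1 - 1))) y := fun y =>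
    (hasDerivAt_pow (n - 1) y).const_mul _
  have hrAt : ∀ y : ℂ, HasDerivAt
      (fun x : ℂ => (n : ℂ) * (((n - 1 : ℕ) : ℂ) * x ^ (n - 1 - 1)))
      ((n : ℂ) * (((n - 1 : ℕ) : ℂ) * (((n - 1 - 1 : ℕ) : ℂ) * y ^ (n - 1 - 1 - 1)))) y :=
    fun y => ((hasDerivAt_pow (n - 1 - 1) y).const_mul _).const_mul _
  -- second derivative function G1
  have hG1At : ∀ y ∈ W, HasDerivAt
      (fun x : ℂ => deriv z (x ^ n) * ((n : ℂ) * x ^ (n - 1)))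
      (deriv (deriv z) (y ^ n) * ((n : ℂ) * y ^ (n - 1)) * ((n : ℂ) * y ^ (n - 1))
        + deriv z (y ^ n) * ((n : ℂ) * (((n - 1 : ℕ) : ℂ) * y ^ (n - 1 - 1)))) y :=
    fun y hy => (hf1At y hy).mul (hqAt y)
  have hG2At : ∀ y ∈ W, HasDerivAt
      (fun x : ℂ => deriv (deriv z) (x ^ n) * ((n : ℂ) * x ^ (n - 1)) * ((n : ℂ) * x ^ (n - 1))
        + deriv z (x ^ n) * ((n : ℂ) * (((n - 1 : ℕ) : ℂ) * x ^ (n - 1 - 1))))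
      ((deriv (deriv (deriv z)) (y ^ n) * ((n : ℂ) * y ^ (n - 1)) * ((n : ℂ) * y ^ (n - 1))
          + deriv (deriv z) (y ^ n) * ((n : ℂ) * (((n - 1 : ℕ) : ℂ) * y ^ (n - 1 - 1))))
          * ((n : ℂ) * y ^ (n - 1))
        + deriv (deriv z) (y ^ n) * ((n : ℂ) * y ^ (n - 1))
          * ((n : ℂ) * (((n - 1 : ℕ) : ℂ) * y ^ (n - 1 - 1)))
        + (deriv (deriv z) (y ^ n) * ((n : ℂ) * y ^ (n - 1))
            * ((n : ℂ) * (((n - 1 : ℕ) : ℂ) * y ^ (n - 1 - 1)))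
          + deriv z (y ^ n)
            * ((n : ℂ) * (((n - 1 : ℕ) : ℂ) * (((n - 1 - 1 : ℕ) : ℂ) * y ^ (n - 1 - 1 - 1)))))) y :=
    fun y hy => (((hf2At y hy).mul (hqAt y)).mul (hqAt y)).add ((hf1At y hy).mul (hrAt y))
  -- derivative identities on W
  have hd1 : ∀ y ∈ W, deriv (fun η' : ℂ => z (η' ^ n)) y
      = deriv z (y ^ n) * ((n : ℂ) * y ^ (n - 1)) := fun y hy => (hgAt y hy).deriv
  have hd2 : ∀ y ∈ W, deriv (deriv (fun η' : ℂ => z (η' ^ n))) y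
      = deriv (deriv z) (y ^ n) * ((n : ℂ) * y ^ (n - 1)) * ((n : ℂ) * y ^ (n - 1))
        + deriv z (y ^ n) * ((n : ℂ) * (((n - 1 : ℕ) : ℂ) * y ^ (n - 1 - 1))) := by
    intro y hy
    have ev : deriv (fun η' : ℂ => z (η' ^ n))
        =ᶠ[nhds y] fun x : ℂ => deriv z (x ^ n) * ((n : ℂ) * x ^ (n - 1)) :=
      Filter.eventuallyEq_of_mem (hWopen.mem_nhds hy) (fun t ht => hd1 t ht)
    rw [ev.deriv_eq]
    exact (hG1At y hy).deriv
  have hd3 : ∀ y ∈ W, deriv (deriv (deriv (fun η' : ℂ => z (η' ^ n)))) y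
      = (deriv (deriv (deriv z)) (y ^ n) * ((n : ℂ) * y ^ (n - 1)) * ((n : ℂ) * y ^ (n - 1))
          + deriv (deriv z) (y ^ n) * ((n : ℂ) * (((n - 1 : ℕ) : ℂ) * y ^ (n - 1 - 1))))
          * ((n : ℂ) * y ^ (n - 1))
        + deriv (deriv z) (y ^ n) * ((n : ℂ) * y ^ (n - 1))
          * ((n : ℂ) * (((n - 1 : ℕ) : ℂ) * y ^ (n - 1 - 1)))
        + (deriv (deriv z) (y ^ n) * ((n : ℂ) * y ^ (n - 1))
            * ((n : ℂ) * (((n - 1 : ℕ) : ℂ) * y ^ (n - 1 - 1)))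
          + deriv z (y ^ n)
            * ((n : ℂ) * (((n - 1 : ℕ) : ℂ) * (((n - 1 - 1 : ℕ) : ℂ) * y ^ (n - 1 - 1 - 1))))) := by
    intro y hy
    have ev : deriv (deriv (fun η' : ℂ => z (η' ^ n)))
        =ᶠ[nhds y] fun x : ℂ =>
          deriv (deriv z) (x ^ n) * ((n : ℂ) * x ^ (n - 1)) * ((n : ℂ) * x ^ (n - 1))
            + deriv z (x ^ n) * ((n : ℂ) * (((n - 1 : ℕ) : ℂ) * x ^ (n - 1 - 1))) :=
      Filter.eventuallyEq_of_mem (hWopen.mem_nhds hy) (fun t ht => hd2 t ht)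
    rw [ev.deriv_eq]
    exact (hG2At y hy).deriv
  -- the key pointwise identity on W
  have key : ∀ x ∈ W, x ^ 2 * schwarzian (fun η' => z (η' ^ n)) x
      = (n : ℂ) ^ 2 * ((x ^ n) ^ 2 * schwarzian z (x ^ n)) + (1 - (n : ℂ) ^ 2) := by
    intro x hx
    have hx0 : x ≠ 0 := hne x hx
    have hb : deriv z (x ^ n) ≠ 0 := hz' _ (hmemW x hx)
    have hxn : x ^ n ≠ 0 := pow_ne_zero _ hx0
    simp only [schwarzian]
    rw [hd3 x hx, hd2 x hx, hd1 x hx]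
    rw [show n - 1 - 1 - 1 = n - 3 from by omega, show n - 1 - 1 = n - 2 from by omega]
    rw [schw_aux3 n hn x hx0, schw_aux2 n hn x hx0, schw_aux1 n hn x hx0]
    exact schw_key ((n : ℂ)) (deriv z (x ^ n)) (deriv (deriv z) (x ^ n))
      (deriv (deriv (deriv z)) (x ^ n)) (x ^ n) (x ^ n / x) x hb hx0 hn0
      (div_ne_zero hxn hx0) (div_mul_cancel₀ _ hx0).symm
  -- W is a punctured neighborhood of 0
  have hWmem : W ∈ nhdsWithin 0 {(0 : ℂ)}ᶜ := by
    have hcont : Filter.Tendsto (fun η : ℂ => η ^ n) (nhds 0) (nhds 0) := by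
      have := (continuous_pow n (M := ℂ)).tendsto 0
      simpa [zero_pow (show n ≠ 0 by omega)] using this
    have hS : (fun η : ℂ => η ^ n) ⁻¹' (U ∪ {0}) ∈ nhds (0 : ℂ) := hcont hUnbhd
    have hS' : ((fun η : ℂ => η ^ n) ⁻¹' (U ∪ {0})) ∩ {(0 : ℂ)}ᶜ ∈ nhdsWithin 0 {(0 : ℂ)}ᶜ :=
      Filter.inter_mem (nhdsWithin_le_nhds hS) self_mem_nhdsWithin
    refine Filter.mem_of_superset hS' ?_
    rintro x ⟨hxU, hx0⟩
    have hx0' : x ≠ 0 := hx0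
    rcases hxU with h | h
    · exact ⟨h, hx0⟩
    · exact absurd h (by simpa using pow_ne_zero n hx0')
  have heq : (fun η : ℂ => η ^ 2 * schwarzian (fun η' => z (η' ^ n)) η)
      =ᶠ[nhdsWithin 0 {(0 : ℂ)}ᶜ]
      (fun η : ℂ => (n : ℂ) ^ 2 * ((η ^ n) ^ 2 * schwarzian z (η ^ n)) + (1 - (n : ℂ) ^ 2)) :=
    Filter.eventuallyEq_of_mem hWmem key
  have hpow_t : Filter.Tendsto (fun η : ℂ => η ^ n)
      (nhdsWithin 0 {(0 : ℂ)}ᶜ) (nhdsWithin 0 {(0 : ℂ)}ᶜ) := by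
    rw [tendsto_nhdsWithin_iff]
    constructor
    · have h0 : Filter.Tendsto (fun η : ℂ => η ^ n) (nhds 0) (nhds 0) := by
        have := (continuous_pow n (M := ℂ)).tendsto 0
        simpa [zero_pow (show n ≠ 0 by omega)] using this
      exact h0.mono_left nhdsWithin_le_nhds
    · filter_upwards [self_mem_nhdsWithin] with x hx
      exact fun h => hx (by simpa using pow_eq_zero_iff (show n ≠ 0 by omega) |>.mp h)
  have hfinal : Filter.Tendsto
      (fun η : ℂ => (n : ℂ) ^ 2 * ((η ^ n) ^ 2 * schwarzian z (η ^ n)) + (1 - (n : ℂ) ^ 2))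
      (nhdsWithin 0 {(0 : ℂ)}ᶜ) (nhds ((n : ℂ) ^ 2 * α + (1 - (n : ℂ) ^ 2))) :=
    ((hlim.comp hpow_t).const_mul ((n : ℂ) ^ 2)).add_const _
  rw [show (1 - (n : ℂ) ^ 2 * (1 - α)) = (n : ℂ) ^ 2 * α + (1 - (n : ℂ) ^ 2) by ring]
  exact hfinal.congr' heq.symm
end

section
/- For every λ ∈ ℂ with λ ≠ 0, λ ≠ −1/2 and λ ≠ −27/4, setting t = −4λ one has (648 + 1824λ + 3157λ² + 476λ³ + 48λ⁴)/(λ²·(27 + 58λ + 8λ²)²) = 16·(10368 − 7296t + 3157t² − 119t³ + 3t⁴)/(4·t²·(t−2)²·(t−27)²). -/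
/-- The sigma invariant of the Picard-Fuchs equation of the family of twists No. 10
matches, under the Möbius change of variable `t = -4λ`, the pullback of the sigma
invariant of Elkies's equation for the Shimura curve `V₁₀/⟨w₂,w₅⟩`. -/
theorem sigma_match_no10 (l : ℂ) (h0 : l ≠ 0) (h1 : l ≠ -1 / 2) (h2 : l ≠ -27 / 4)
    (t : ℂ) (ht : t = -4 * l) :
    (648 + 1824 * l + 3157 * l ^ 2 + 476 * l ^ 3 + 48 * l ^ 4)
        / (l ^ 2 * (27 + 58 * l + 8 * l ^ 2) ^ 2)
      = 16 * (10368 - 7296 * t + 3157 * t ^ 2 - 119 * t ^ 3 + 3 * t ^ 4)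
        / (4 * t ^ 2 * (t - 2) ^ 2 * (t - 27) ^ 2) := by
  subst ht
  have e1 : (2 : ℂ) * l + 1 ≠ 0 := by
    intro h; apply h1; field_simp; linear_combination h
  have e2 : (4 : ℂ) * l + 27 ≠ 0 := by
    intro h; apply h2; field_simp; linear_combination h
  have d1 : l ^ 2 * (27 + 58 * l + 8 * l ^ 2) ^ 2 ≠ 0 := by
    have : (27 : ℂ) + 58 * l + 8 * l ^ 2 = (2 * l + 1) * (4 * l + 27) := by ring
    rw [this]
    exact mul_ne_zero (pow_ne_zero _ h0) (pow_ne_zero _ (mul_ne_zero e1 e2))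
  have d2 : 4 * (-4 * l) ^ 2 * (-4 * l - 2) ^ 2 * (-4 * l - 27) ^ 2 ≠ 0 := by
    have h2' : (-4 : ℂ) * l - 2 = -2 * (2 * l + 1) := by ring
    have h3' : (-4 : ℂ) * l - 27 = -(4 * l + 27) := by ring
    rw [h2', h3']
    apply mul_ne_zero (mul_ne_zero (mul_ne_zero (by norm_num : (4:ℂ) ≠ 0) (pow_ne_zero _ (mul_ne_zero (by norm_num) h0))) (pow_ne_zero _ (mul_ne_zero (by norm_num) e1))) (pow_ne_zero _ (neg_ne_zero.mpr e2))
  rw [div_eq_div_iff d1 d2]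
  ring
end

section
/- For every t ∈ ℂ with t ≠ 0, t ≠ 1 and t ≠ 81, setting λ = (t−81)/(8t) one has (35t⁴ − 3680t³ + 244242t² − 244944t + 177147)/(36·(t−81)²·(t−1)²·t²) = (81/(8t²))²·3·(25 − 210λ + 2179λ² + 216λ³ + 16λ⁴)/((1−8λ)²·λ²·(10+λ)²). -/
/-- The sigma invariant of Elkies's equation for the Shimura curve `V₁₅/⟨w₃,w₅⟩`
matches, under the Möbius change of variable `λ = (t-81)/(8t)` (whose derivative is
`81/(8t²)`), the pullback of the sigma invariant of the Picard-Fuchs equation of the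
family of twists No. 3. -/
theorem sigma_match_no3 (t : ℂ) (h0 : t ≠ 0) (h1 : t ≠ 1) (h2 : t ≠ 81)
    (l : ℂ) (hl : l = (t - 81) / (8 * t)) :
    (35 * t ^ 4 - 3680 * t ^ 3 + 244242 * t ^ 2 - 244944 * t + 177147)
        / (36 * (t - 81) ^ 2 * (t - 1) ^ 2 * t ^ 2)
      = (81 / (8 * t ^ 2)) ^ 2 * 3
          * (25 - 210 * l + 2179 * l ^ 2 + 216 * l ^ 3 + 16 * l ^ 4)
        / ((1 - 8 * l) ^ 2 * l ^ 2 * (10 + l) ^ 2) := by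
  subst hl
  have h81 : t - 81 ≠ (0:ℂ) := sub_ne_zero.mpr h2
  have h1' : t - 1 ≠ (0:ℂ) := sub_ne_zero.mpr h1
  have e1 : (1 : ℂ) - 8 * ((t - 81) / (8 * t)) = 81 / t := by field_simp; ring
  have e2 : (10 : ℂ) + (t - 81) / (8 * t) = 81 * (t - 1) / (8 * t) := by field_simp; ring
  rw [e1, e2]
  rw [div_eq_div_iff (by simp [pow_ne_zero, h0, h81, h1', mul_ne_zero]) (by
    apply mul_ne_zero (mul_ne_zero (pow_ne_zero _ (div_ne_zero (by norm_num) h0))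
      (pow_ne_zero _ (div_ne_zero h81 (mul_ne_zero (by norm_num) h0))))
      (pow_ne_zero _ (div_ne_zero (mul_ne_zero (by norm_num) h1') (mul_ne_zero (by norm_num) h0))))]
  field_simp
  have ht : (t:ℂ)⁻¹ ^ 14 * t ^ 14 = 1 := by
    rw [← mul_pow, inv_mul_cancel₀ h0, one_pow]
  ring
end

section
/- For every λ ∈ ℂ with λ ≠ 0, λ ≠ 1 and λ ≠ −1, setting μ = (1+λ)/(1−λ) one has (32 + 49λ² + 27λ⁴)/(36·λ²·(λ²−1)²) = (2/(1−λ)²)²·(27 + 5μ + 64μ² + 5μ³ + 27μ⁴)/(36·μ²·(μ²−1)²). -/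
lemma sigma_aux_num (p s : ℂ) (hs : s ≠ 0) :
    (2 / s ^ 2) ^ 2 * (27 + 5 * (p / s) + 64 * (p / s) ^ 2
        + 5 * (p / s) ^ 3 + 27 * (p / s) ^ 4)
      = (4 * (27 * s ^ 4 + 5 * p * s ^ 3 + 64 * p ^ 2 * s ^ 2
          + 5 * p ^ 3 * s + 27 * p ^ 4)) / s ^ 8 := by
  have h14 : s ^ 14 * s⁻¹ ^ 14 = 1 := by
    rw [← mul_pow, mul_inv_cancel₀ hs, one_pow]
  field_simp
  ring_nf

lemma sigma_aux_den (p s : ℂ) (hs : s ≠ 0) :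
    36 * (p / s) ^ 2 * ((p / s) ^ 2 - 1) ^ 2
      = 36 * p ^ 2 * (p ^ 2 - s ^ 2) ^ 2 / s ^ 6 := by
  field_simp

/-- The sigma invariant of the Picard-Fuchs equation of the family of twists No. 9
matches, under the Möbius change of variable `μ = (1+λ)/(1-λ)` (whose derivative is
`2/(1-λ)²`), the pullback of the sigma invariant of the family of twists No. 11. -/
theorem sigma_match_no9_no11 (l : ℂ) (h0 : l ≠ 0) (h1 : l ≠ 1) (h2 : l ≠ -1)
    (m : ℂ) (hm : m = (1 + l) / (1 - l)) :
    (32 + 49 * l ^ 2 + 27 * l ^ 4) / (36 * l ^ 2 * (l ^ 2 - 1) ^ 2)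
      = (2 / (1 - l) ^ 2) ^ 2
          * (27 + 5 * m + 64 * m ^ 2 + 5 * m ^ 3 + 27 * m ^ 4)
        / (36 * m ^ 2 * (m ^ 2 - 1) ^ 2) := by
  have hs : (1 : ℂ) - l ≠ 0 := sub_ne_zero.mpr (fun h => h1 h.symm)
  have hp : (1 : ℂ) + l ≠ 0 := fun h => h2 (by linear_combination h)
  have hl1 : l ^ 2 - 1 ≠ 0 := by
    intro h
    have : (l - 1) * (l + 1) = 0 := by linear_combination h
    rcases mul_eq_zero.mp this with h | h
    · exact h1 (by linear_combination h)
    · exact h2 (by linear_combination h)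
  subst hm
  rw [sigma_aux_num (1 + l) (1 - l) hs, sigma_aux_den (1 + l) (1 - l) hs,
    div_div_div_comm,
    show (1 - l) ^ 8 / (1 - l) ^ 6 = (1 - l) ^ 2 by
      rw [eq_comm, eq_div_iff (pow_ne_zero 6 hs)]; ring]
  have hd : (1 + l) ^ 2 - (1 - l) ^ 2 ≠ 0 := by
    have : (1 + l) ^ 2 - (1 - l) ^ 2 = 4 * l := by ring
    rw [this]; exact mul_ne_zero (by norm_num) h0
  rw [div_div]
  rw [div_eq_div_iff
    (mul_ne_zero (mul_ne_zero (by norm_num) (pow_ne_zero _ h0)) (pow_ne_zero _ hl1))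
    (mul_ne_zero
      (mul_ne_zero (mul_ne_zero (by norm_num) (pow_ne_zero _ hp)) (pow_ne_zero _ hd))
      (pow_ne_zero _ hs))]
  ring
end
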